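/- Let b > 0, λ > 0, and let Z be a zero-mean real random variable with finite variance satisfying Z ≤ b almost surely. With φ(u) = e^u − u − 1, it holds that E[e^{λZ}] ≤ exp((φ(bλ)/b²) E[Z²]). -/

import Mathlib

open MeasureTheory Nat

private lemma exp_tsum (y : ℝ) : Real.exp y = ∑' n : ℕ, y ^ n / n ! := by
  rw [Real.exp_eq_exp_ℝ, NormedSpace.exp_eq_tsum_div]

private lemma phi_series (y : ℝ) :
    Real.exp y - y - 1 = ∑' n : ℕ, y ^ (n + 2) / (n + 2)! := by
  have hs := Real.summable_pow_div_factorial y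
  have h := Summable.sum_add_tsum_nat_add 2 hs
  rw [exp_tsum y, ← h]
  simp [Finset.sum_range_succ]
  ring

private lemma phi_nonneg (y : ℝ) : 0 ≤ Real.exp y - y - 1 := by
  nlinarith [Real.add_one_le_exp y]

private lemma phi_mono {y B : ℝ} (hy : 0 ≤ y) (hyB : y ≤ B) :
    B ^ 2 * (Real.exp y - y - 1) ≤ y ^ 2 * (Real.exp B - B - 1) := by
  have hB : 0 ≤ B := hy.trans hyB
  have hsy : Summable (fun n : ℕ => B ^ 2 * (y ^ (n + 2) / (n + 2)!)) := by
    exact ((summable_nat_add_iff 2).2 (Real.summable_pow_div_factorial y)).mul_left _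
  have hsB : Summable (fun n : ℕ => y ^ 2 * (B ^ (n + 2) / (n + 2)!)) := by
    exact ((summable_nat_add_iff 2).2 (Real.summable_pow_div_factorial B)).mul_left _
  rw [phi_series y, phi_series B, ← tsum_mul_left, ← tsum_mul_left]
  refine Summable.tsum_le_tsum (fun n => ?_) hsy hsB
  have hfac : (0:ℝ) < (n + 2)! := by positivity
  rw [mul_div_assoc', mul_div_assoc', div_le_div_iff_of_pos_right hfac]
  calc B ^ 2 * y ^ (n + 2) = (B ^ 2 * y ^ 2) * y ^ n := by ring
    _ ≤ (B ^ 2 * y ^ 2) * B ^ n := by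
        have h1 := pow_le_pow_left₀ hy hyB n
        have h2 : (0:ℝ) ≤ B ^ 2 * y ^ 2 := by positivity
        exact mul_le_mul_of_nonneg_left h1 h2
    _ = y ^ 2 * B ^ (n + 2) := by ring

private lemma exp_le_quadratic_of_nonpos {y : ℝ} (hy : y ≤ 0) :
    Real.exp y - y - 1 ≤ y ^ 2 / 2 := by
  have hf : ∀ t : ℝ, HasDerivAt (fun t : ℝ => 1 + t + t ^ 2 / 2 - Real.exp t)
      (1 + t - Real.exp t) t := by
    intro t
    have h1 : HasDerivAt (fun t : ℝ => 1 + t + t ^ 2 / 2 - Real.exp t)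
        (0 + 1 + (2 * t ^ 1 * 1) / 2 - Real.exp t) t := by
      exact (((hasDerivAt_const t (1:ℝ)).add (hasDerivAt_id t)).add
        (((hasDerivAt_id t).pow 2).div_const 2)).sub (Real.hasDerivAt_exp t)
    simpa using h1
  have hanti : Antitone (fun t : ℝ => 1 + t + t ^ 2 / 2 - Real.exp t) := by
    refine antitone_of_deriv_nonpos (fun t => (hf t).differentiableAt) fun t => ?_
    rw [(hf t).deriv]
    nlinarith [Real.add_one_le_exp t]
  have := hanti hy
  simp only [Real.exp_zero] at this
  nlinarith [this]

private lemma half_le_phi {B : ℝ} (hB : 0 ≤ B) :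
    B ^ 2 / 2 ≤ Real.exp B - B - 1 := by
  have h : ∑ n ∈ Finset.range 3, B ^ n / n ! ≤ ∑' n : ℕ, B ^ n / n ! := by
    refine Summable.sum_le_tsum _ (fun n _ => by positivity) (Real.summable_pow_div_factorial B)
  rw [← exp_tsum B] at h
  simp [Finset.sum_range_succ] at h
  nlinarith [h]

private lemma phi_key {y B : ℝ} (hB : 0 < B) (hyB : y ≤ B) :
    Real.exp y - y - 1 ≤ (Real.exp B - B - 1) / B ^ 2 * y ^ 2 := by
  have hB2 : (0:ℝ) < B ^ 2 := by positivity
  rcases le_or_gt 0 y with hy | hy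
  · rw [div_mul_eq_mul_div, le_div_iff₀ hB2]
    nlinarith [phi_mono hy hyB]
  · have h1 := exp_le_quadratic_of_nonpos hy.le
    have h2 := half_le_phi hB.le
    have h3 : y ^ 2 / 2 ≤ (Real.exp B - B - 1) / B ^ 2 * y ^ 2 := by
      rw [div_mul_eq_mul_div, le_div_iff₀ hB2]
      nlinarith [sq_nonneg y]
    linarith

theorem bennett_mgf_single
    {Ω : Type*} [MeasurableSpace Ω] (P : Measure Ω) [IsProbabilityMeasure P]
    (Z : Ω → ℝ) (hZ : Measurable Z)
    (b l : ℝ) (hb : 0 < b) (hl : 0 < l)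
    (hmean : ∫ ω, Z ω ∂P = 0)
    (h2 : Integrable (fun ω => (Z ω) ^ 2) P)
    (hbd : ∀ᵐ ω ∂P, Z ω ≤ b) :
    ∫ ω, Real.exp (l * Z ω) ∂P
      ≤ Real.exp ((Real.exp (b * l) - b * l - 1) / b ^ 2 * ∫ ω, (Z ω) ^ 2 ∂P) := by
  set c : ℝ := (Real.exp (b * l) - b * l - 1) / b ^ 2 with hc
  have hc0 : 0 ≤ c := by
    have := phi_nonneg (b * l)
    positivity
  -- Z is integrable
  have hZint : Integrable Z P := by
    refine Integrable.mono' ((integrable_const (1:ℝ)).add h2) hZ.aestronglyMeasurable ?_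
    filter_upwards with ω
    have : |Z ω| ≤ 1 + Z ω ^ 2 := by nlinarith [sq_nonneg (|Z ω| - 1), sq_abs (Z ω)]
    simpa using this
  -- the dominating function
  set g : Ω → ℝ := fun ω => 1 + l * Z ω + c * Z ω ^ 2 with hg
  have hgint : Integrable g P :=
    ((integrable_const (1:ℝ)).add (hZint.const_mul l)).add (h2.const_mul c)
  -- pointwise bound
  have hle : ∀ᵐ ω ∂P, Real.exp (l * Z ω) ≤ g ω := by
    filter_upwards [hbd] with ω hω
    have hyB : l * Z ω ≤ b * l := by
      have := mul_le_mul_of_nonneg_left hω hl.le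
      linarith [this]
    have key := phi_key (by positivity : (0:ℝ) < b * l) hyB
    have halg : (Real.exp (b * l) - b * l - 1) / (b * l) ^ 2 * (l * Z ω) ^ 2
        = c * Z ω ^ 2 := by
      rw [hc]
      field_simp
    rw [halg] at key
    simp only [hg]
    linarith [key]
  have hexpint : Integrable (fun ω => Real.exp (l * Z ω)) P := by
    refine Integrable.mono' hgint ((hZ.const_mul l).exp.aestronglyMeasurable) ?_
    filter_upwards [hle] with ω hω
    rw [Real.norm_eq_abs, abs_of_pos (Real.exp_pos _)]
    exact hω
  have hint : ∫ ω, Real.exp (l * Z ω) ∂P ≤ ∫ ω, g ω ∂P :=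
    integral_mono_ae hexpint hgint hle
  have hgval : ∫ ω, g ω ∂P = 1 + c * ∫ ω, Z ω ^ 2 ∂P := by
    simp only [hg]
    have i1 : Integrable (fun ω => 1 + l * Z ω) P := (integrable_const 1).add (hZint.const_mul l)
    have i2 : Integrable (fun ω => c * Z ω ^ 2) P := h2.const_mul c
    rw [integral_add i1 i2, integral_add (integrable_const (1:ℝ)) (hZint.const_mul l),
      integral_const, integral_const_mul, integral_const_mul, hmean]
    simp
  rw [hgval] at hint
  calc ∫ ω, Real.exp (l * Z ω) ∂P ≤ 1 + c * ∫ ω, Z ω ^ 2 ∂P := hint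
    _ ≤ Real.exp (c * ∫ ω, Z ω ^ 2 ∂P) := by
        linarith [Real.add_one_le_exp (c * ∫ ω, Z ω ^ 2 ∂P)]
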